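/- Let σ = (Z, P) be a stability condition on a triangulated category D. If gldim σ ≤ 1 (where gldim σ = sup{φ₂ - φ₁ : Hom(P(φ₁), P(φ₂)) ≠ 0}), then every indecomposable object of D is semistable with respect to σ. -/

import Mathlib

open CategoryTheory CategoryTheory.Limits CategoryTheory.Pretriangulated

universe v u

variable (C : Type u) [Category.{v} C] [Preadditive C] [HasZeroObject C]
  [HasShift C ℤ] [∀ n : ℤ, (shiftFunctor C n).Additive] [Pretriangulated C]
  [HasFiniteBiproducts C]

/-- A Bridgeland stability condition, encoded by a central charge on objects and a slicing. -/
structure StabilityCondition where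
  Z : C → ℂ
  P : ℝ → Set C
  mem_of_iso : ∀ {φ : ℝ} {E F : C}, (E ≅ F) → E ∈ P φ → F ∈ P φ
  charge : ∀ {φ : ℝ} {E : C}, E ∈ P φ → ¬ IsZero E →
    ∃ m : ℝ, 0 < m ∧ Z E = (m : ℂ) * Complex.exp (Real.pi * φ * Complex.I)
  shift_mem : ∀ (φ : ℝ) (E : C), E ∈ P φ ↔ E⟦(1 : ℤ)⟧ ∈ P (φ + 1)
  sum_mem : ∀ {φ : ℝ} {X Y : C}, X ∈ P φ → Y ∈ P φ → (X ⊞ Y) ∈ P φ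
  summand_mem : ∀ {φ : ℝ} {X Y : C}, (X ⊞ Y) ∈ P φ → X ∈ P φ
  hom_zero : ∀ {φ₁ φ₂ : ℝ}, φ₂ < φ₁ → ∀ {E F : C}, E ∈ P φ₁ → F ∈ P φ₂ →
    ∀ f : E ⟶ F, f = 0
  HN : ∀ E : C, ¬ IsZero E → ∃ (n : ℕ) (obj : Fin (n + 1) → C) (φ : Fin n → ℝ),
    IsZero (obj 0) ∧ Nonempty (obj (Fin.last n) ≅ E) ∧ StrictAnti φ ∧
    ∀ i : Fin n, ∃ (A : C) (f : obj i.castSucc ⟶ obj i.succ) (g : obj i.succ ⟶ A)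
      (h : A ⟶ (obj i.castSucc)⟦(1 : ℤ)⟧),
      (Triangle.mk f g h ∈ distTriang C) ∧ A ∈ P (φ i) ∧ ¬ IsZero A

variable {C}

/-- `E` is semistable iff it lies in some slice. -/
def StabilityCondition.IsSemistable (σ : StabilityCondition C) (E : C) : Prop :=
  ∃ φ : ℝ, E ∈ σ.P φ

/-- The global dimension of a stability condition. -/
noncomputable def StabilityCondition.gldim (σ : StabilityCondition C) : EReal :=
  sSup {d : EReal | ∃ (φ₁ φ₂ : ℝ) (E F : C) (f : E ⟶ F),
    E ∈ σ.P φ₁ ∧ F ∈ σ.P φ₂ ∧ f ≠ 0 ∧ d = ((φ₂ - φ₁ : ℝ) : EReal)}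

/-- An object is indecomposable if it is nonzero and any biproduct decomposition is trivial. -/
def IsIndec (E : C) : Prop :=
  ¬ IsZero E ∧ ∀ (X Y : C), (E ≅ X ⊞ Y) → IsZero X ∨ IsZero Y

/-- `E` is stable of phase `φ`: it is a nonzero object of `P(φ)` admitting no nontrivial
extension decomposition inside `P(φ)` (i.e. it is simple in the abelian category `P(φ)`). -/
def StabilityCondition.IsStableOfPhase (σ : StabilityCondition C) (E : C) (φ : ℝ) : Prop :=
  E ∈ σ.P φ ∧ ¬ IsZero E ∧ ∀ (A B : C) (f : A ⟶ E) (g : E ⟶ B) (h : B ⟶ A⟦(1 : ℤ)⟧),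
    (Triangle.mk f g h ∈ distTriang C) → A ∈ σ.P φ → B ∈ σ.P φ →
    ¬ IsZero A → ¬ IsZero B → False

/-- The Krull–Schmidt property: every nonzero object is a finite biproduct of indecomposables. -/
def KrullSchmidt : Prop :=
  ∀ X : C, ¬ IsZero X → ∃ (m : ℕ) (f : Fin m → C),
    (∀ i, IsIndec (f i)) ∧ Nonempty (X ≅ ⨁ f)


lemma StabilityCondition.hom_zero_of_gap (σ : StabilityCondition C) (h : σ.gldim ≤ 1)
    {φ₁ φ₂ : ℝ} (hgap : 1 < φ₂ - φ₁) {E F : C} (hE : E ∈ σ.P φ₁) (hF : F ∈ σ.P φ₂)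
    (f : E ⟶ F) : f = 0 := by
  by_contra hf
  have hmem : ((φ₂ - φ₁ : ℝ) : EReal) ∈ {d : EReal | ∃ (ψ₁ ψ₂ : ℝ) (X Y : C) (g : X ⟶ Y),
      X ∈ σ.P ψ₁ ∧ Y ∈ σ.P ψ₂ ∧ g ≠ 0 ∧ d = ((ψ₂ - ψ₁ : ℝ) : EReal)} :=
    ⟨φ₁, φ₂, E, F, f, hE, hF, hf, rfl⟩
  have hle : ((φ₂ - φ₁ : ℝ) : EReal) ≤ 1 := (le_sSup hmem).trans h
  rw [show (1 : EReal) = ((1 : ℝ) : EReal) from rfl, EReal.coe_le_coe_iff] at hle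
  linarith

/-- If `gldim σ ≤ 1` then every indecomposable object is semistable. -/
theorem gldim_le_one_totally_semistable (σ : StabilityCondition C)
    (h : σ.gldim ≤ 1) :
    ∀ E : C, IsIndec E → σ.IsSemistable E := by
  intro E hE
  obtain ⟨hEnz, hind⟩ := hE
  obtain ⟨n, obj, φ, h0, ⟨e⟩, hanti, htri⟩ := σ.HN E hEnz
  rcases n with _ | m
  · exact absurd (h0.of_iso e.symm) hEnz
  obtain ⟨A, f, g, hc, htr, hA, hAnz⟩ := htri (Fin.last m)
  -- Claim: all maps from A to (obj k)⟦1⟧ vanish, for k ≤ m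
  have claim : ∀ k : ℕ, ∀ hk : k ≤ m, ∀ u : A ⟶ (obj ⟨k, by omega⟩)⟦(1 : ℤ)⟧, u = 0 := by
    intro k
    induction k with
    | zero =>
      intro _ u
      have hz : IsZero ((obj (0 : Fin (m + 2)))⟦(1 : ℤ)⟧) :=
        (shiftFunctor C (1 : ℤ)).map_isZero h0
      exact hz.eq_of_tgt u 0
    | succ k ih =>
      intro hk u
      obtain ⟨B, f', g', h', htr', hB, _⟩ := htri ⟨k, by omega⟩
      have htr'' := rot_of_distTriang _ (rot_of_distTriang _ htr')
      have hgap : (1 : ℝ) < (φ ⟨k, by omega⟩ + 1) - φ (Fin.last m) := by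
        have := hanti (show (⟨k, by omega⟩ : Fin (m + 1)) < Fin.last m by
          simp [Fin.lt_def, Fin.last]; omega)
        linarith
      have hB1 : B⟦(1 : ℤ)⟧ ∈ σ.P (φ ⟨k, by omega⟩ + 1) := (σ.shift_mem _ _).1 hB
      have hzero : u ≫ ((Triangle.mk f' g' h').rotate.rotate).mor₃ = 0 := by
        dsimp [Triangle.rotate, Triangle.mk]
        rw [Preadditive.comp_neg, σ.hom_zero_of_gap h hgap hA hB1 (u ≫ g'⟦(1 : ℤ)⟧'), neg_zero]; rfl
      obtain ⟨v, hv⟩ := Triangle.coyoneda_exact₃ _ htr'' u hzero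
      have hv0 : v = 0 := ih (by omega) v
      rw [hv, hv0, zero_comp]; rfl
  -- the connecting map of the top triangle vanishes
  have hc0 : hc = 0 := claim m le_rfl hc
  obtain ⟨e', he'₁, he'₂⟩ :=
    exists_iso_binaryBiproduct_of_distTriang (Triangle.mk f g hc) htr hc0
  -- E is isomorphic to obj(castSucc) ⊞ A
  have eE : E ≅ obj ((Fin.last m).castSucc) ⊞ A := e.symm ≪≫ e'
  rcases hind _ _ eE with hX | hA0
  · -- then A ≅ E, so E is semistable
    have hiso : A ≅ obj ((Fin.last m).castSucc) ⊞ A :=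
      { hom := biprod.inr
        inv := biprod.snd
        hom_inv_id := biprod.inr_snd
        inv_hom_id := by
          apply biprod.hom_ext'
          · exact hX.eq_of_src _ _
          · simp }
    exact ⟨φ (Fin.last m), σ.mem_of_iso (hiso ≪≫ eE.symm) hA⟩
  · exact absurd hA0 hAnz
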